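/- With the weighted operator norm ‖G‖_σ (max of weighted row and column sums), for any 0 < γ < σ one has ‖G‖_{σ−γ} ≤ c_γ · sup_x ‖P_x G‖_σ, where P_x G is the x-th row of G and c_γ = Σ_{m∈ℤ²} e^{−γ|m|} < ∞. -/

import Mathlib

open Real

/-- Euclidean norm of a lattice point of ℤ². -/
noncomputable def latNorm (z : ℤ × ℤ) : ℝ :=
  Real.sqrt ((z.1 : ℝ)^2 + (z.2 : ℝ)^2)

/-- The weighted operator norm (max of weighted row and column sums), in `ℝ≥0∞`. -/
noncomputable def wnorm (σ s : ℝ) (G : ℤ × ℤ → ℤ × ℤ → ℂ) : ENNReal :=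
  max
    (⨆ x : ℤ × ℤ, ∑' y : ℤ × ℤ, (‖G x y‖₊ : ENNReal)
      * ENNReal.ofReal (Real.exp (σ * latNorm (x - y)) * (1 + (latNorm (x - y))^2)^(s/2)))
    (⨆ y : ℤ × ℤ, ∑' x : ℤ × ℤ, (‖G x y‖₊ : ENNReal)
      * ENNReal.ofReal (Real.exp (σ * latNorm (x - y)) * (1 + (latNorm (x - y))^2)^(s/2)))

/-- The matrix `G` restricted to the single row `x`. -/
noncomputable def rowP (x : ℤ × ℤ) (G : ℤ × ℤ → ℤ × ℤ → ℂ) : ℤ × ℤ → ℤ × ℤ → ℂ :=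
  fun x' y => if x' = x then G x y else 0

lemma latNorm_nonneg (m : ℤ × ℤ) : 0 ≤ latNorm m := Real.sqrt_nonneg _

/-- Row-wise estimate: `‖G‖_{σ−γ} ≤ c_γ · sup_x ‖P_x G‖_σ` with
`c_γ = Σ_{m∈ℤ²} e^{−γ|m|}`. -/
theorem stmt_14 (σ γ s : ℝ) (hs : 0 ≤ s) (hγ : 0 < γ) (hγσ : γ < σ)
    (G : ℤ × ℤ → ℤ × ℤ → ℂ) :
    wnorm (σ - γ) s G ≤
      (∑' m : ℤ × ℤ, ENNReal.ofReal (Real.exp (-γ * latNorm m)))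
        * ⨆ x : ℤ × ℤ, wnorm σ s (rowP x G) := by
  set w : ℝ → ℤ × ℤ → ENNReal := fun τ m =>
    ENNReal.ofReal (Real.exp (τ * latNorm m) * (1 + (latNorm m)^2)^(s/2)) with hw
  set e : ℤ × ℤ → ENNReal := fun m => ENNReal.ofReal (Real.exp (-γ * latNorm m)) with he
  set c : ENNReal := ∑' m : ℤ × ℤ, e m with hc
  set S : ENNReal := ⨆ x : ℤ × ℤ, wnorm σ s (rowP x G) with hS
  have hp : ∀ m : ℤ × ℤ, (0:ℝ) ≤ (1 + (latNorm m)^2)^(s/2) := by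
    intro m; positivity
  -- each full σ-row sum is bounded by S
  have hrow : ∀ x : ℤ × ℤ,
      (∑' y : ℤ × ℤ, (‖G x y‖₊ : ENNReal) * w σ (x - y)) ≤ S := by
    intro x
    refine le_trans ?_ (le_iSup (fun x => wnorm σ s (rowP x G)) x)
    have h1 : (∑' y : ℤ × ℤ, (‖G x y‖₊ : ENNReal) * w σ (x - y))
        = ∑' y : ℤ × ℤ, (‖rowP x G x y‖₊ : ENNReal) * w σ (x - y) := by
      simp [rowP]
    rw [h1]
    exact le_trans (le_iSup (fun x' => ∑' y : ℤ × ℤ,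
      (‖rowP x G x' y‖₊ : ENNReal) * w σ (x' - y)) x) (le_max_left _ _)
  have hterm : ∀ x y : ℤ × ℤ, (‖G x y‖₊ : ENNReal) * w σ (x - y) ≤ S := fun x y =>
    le_trans (ENNReal.le_tsum y) (hrow x)
  have hone : (1 : ENNReal) ≤ c := by
    refine le_trans ?_ (ENNReal.le_tsum (0,0))
    simp [he, latNorm]
  have hsplit : ∀ m : ℤ × ℤ, w (σ - γ) m = w σ m * e m := by
    intro m
    rw [hw, he]
    dsimp only
    rw [← ENNReal.ofReal_mul (by positivity)]
    congr 1
    rw [mul_right_comm, ← Real.exp_add]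
    ring_nf
  have hmono : ∀ m : ℤ × ℤ, w (σ - γ) m ≤ w σ m := by
    intro m
    apply ENNReal.ofReal_le_ofReal
    apply mul_le_mul_of_nonneg_right _ (hp m)
    exact Real.exp_le_exp.2 (mul_le_mul_of_nonneg_right (by linarith) (latNorm_nonneg m))
  rw [show wnorm (σ - γ) s G = max
      (⨆ x : ℤ × ℤ, ∑' y : ℤ × ℤ, (‖G x y‖₊ : ENNReal) * w (σ - γ) (x - y))
      (⨆ y : ℤ × ℤ, ∑' x : ℤ × ℤ, (‖G x y‖₊ : ENNReal) * w (σ - γ) (x - y)) from rfl]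
  apply max_le
  · refine iSup_le fun x => ?_
    have h1 : (∑' y : ℤ × ℤ, (‖G x y‖₊ : ENNReal) * w (σ - γ) (x - y)) ≤ S :=
      le_trans (ENNReal.tsum_le_tsum fun y => mul_le_mul_right (hmono _) _) (hrow x)
    exact le_trans h1 (le_mul_of_one_le_left zero_le hone)
  · refine iSup_le fun y => ?_
    calc (∑' x : ℤ × ℤ, (‖G x y‖₊ : ENNReal) * w (σ - γ) (x - y))
        = ∑' x : ℤ × ℤ, ((‖G x y‖₊ : ENNReal) * w σ (x - y)) * e (x - y) := by
          refine tsum_congr fun x => ?_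
          rw [hsplit, mul_assoc]
      _ ≤ ∑' x : ℤ × ℤ, S * e (x - y) :=
          ENNReal.tsum_le_tsum fun x => mul_le_mul_left (hterm x y) _
      _ = S * ∑' x : ℤ × ℤ, e (x - y) := ENNReal.tsum_mul_left
      _ = S * c := by
          congr 1
          exact (Equiv.subRight y).tsum_eq e
      _ = c * S := mul_comm _ _
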